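/- Polynomials are large on a definite interval near a uniformly perfect set: For every integer d ≥ 1 and every κ ∈ (0,1) there exists κ̃ ∈ (0,1), depending only on κ and d, such that the following holds. Let ρ ∈ (0,1] with κ < ρ/100, and let K ⊆ (−ρ, ρ) be a κ-uniformly perfect subset of ℝ containing 0. Then for every real polynomial P of degree at most d there exists z₀ ∈ K ∩ (−ρ/2, ρ/2) such that |P(z)| ≥ κ̃ · ‖P‖_{∞,[−1,1]} for all z ∈ [z₀ − κ̃, z₀ + κ̃]. -/

import Mathlib

open Finset Polynomial

lemma abs_prod_le' {ι : Type*} (T : Finset ι) (f : ι → ℝ) {R : ℝ} (hR : 0 ≤ R)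
    (h : ∀ j ∈ T, |f j| ≤ R) : |∏ j ∈ T, f j| ≤ R ^ T.card := by
  rw [Finset.abs_prod]
  calc ∏ j ∈ T, |f j| ≤ ∏ _j ∈ T, R := Finset.prod_le_prod (fun j _ => abs_nonneg _) h
    _ = R ^ T.card := Finset.prod_const R

lemma abs_prod_sub_prod_le' {ι : Type*} [DecidableEq ι] (T : Finset ι) (f g : ι → ℝ)
    {R ε : ℝ} (hR : 1 ≤ R) (hε : 0 ≤ ε)
    (hf : ∀ j ∈ T, |f j| ≤ R) (hg : ∀ j ∈ T, |g j| ≤ R)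
    (hfg : ∀ j ∈ T, |f j - g j| ≤ ε) :
    |∏ j ∈ T, f j - ∏ j ∈ T, g j| ≤ T.card * ε * R ^ T.card := by
  induction T using Finset.induction_on with
  | empty => simp
  | insert a T ha ih =>
    have hR0 : (0:ℝ) ≤ R := le_trans zero_le_one hR
    have hfa := hf a (mem_insert_self a T)
    have hga := hg a (mem_insert_self a T)
    have hfga := hfg a (mem_insert_self a T)
    have hf' : ∀ j ∈ T, |f j| ≤ R := fun j hj => hf j (mem_insert_of_mem hj)
    have hg' : ∀ j ∈ T, |g j| ≤ R := fun j hj => hg j (mem_insert_of_mem hj)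
    have hfg' : ∀ j ∈ T, |f j - g j| ≤ ε := fun j hj => hfg j (mem_insert_of_mem hj)
    have IH := ih hf' hg' hfg'
    rw [Finset.prod_insert ha, Finset.prod_insert ha, Finset.card_insert_of_notMem ha]
    have key : f a * ∏ j ∈ T, f j - g a * ∏ j ∈ T, g j
        = (f a - g a) * ∏ j ∈ T, f j + g a * (∏ j ∈ T, f j - ∏ j ∈ T, g j) := by ring
    rw [key]
    have h1 : |(f a - g a) * ∏ j ∈ T, f j| ≤ ε * R ^ T.card := by
      rw [abs_mul]
      exact mul_le_mul hfga (abs_prod_le' T f hR0 hf') (abs_nonneg _) hε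
    have h2 : |g a * (∏ j ∈ T, f j - ∏ j ∈ T, g j)| ≤ R * (T.card * ε * R ^ T.card) := by
      rw [abs_mul]
      exact mul_le_mul hga IH (abs_nonneg _) hR0
    calc |(f a - g a) * ∏ j ∈ T, f j + g a * (∏ j ∈ T, f j - ∏ j ∈ T, g j)|
        ≤ ε * R ^ T.card + R * (T.card * ε * R ^ T.card) :=
          (abs_add_le _ _).trans (add_le_add h1 h2)
      _ ≤ (T.card + 1 : ℕ) * ε * R ^ (T.card + 1) := by
          push_cast
          rw [pow_succ]
          nlinarith [mul_nonneg (mul_nonneg hε (pow_nonneg hR0 T.card)) (sub_nonneg.2 hR),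
            mul_nonneg (mul_nonneg (Nat.cast_nonneg (α := ℝ) T.card) hε) (pow_nonneg hR0 T.card)]

lemma lagrange_eval_eq' {d : ℕ} (v : Fin (d+1) → ℝ) (hv : Function.Injective v)
    (P : Polynomial ℝ) (hP : P.natDegree ≤ d) (t : ℝ) :
    P.eval t = ∑ i : Fin (d+1), P.eval (v i) *
      ∏ j ∈ Finset.univ.erase i, ((v i - v j)⁻¹ * (t - v j)) := by
  have hdeg : P.degree < (#(Finset.univ : Finset (Fin (d+1))) : ℕ) := by
    simp only [Finset.card_univ, Fintype.card_fin]
    calc P.degree ≤ (P.natDegree : WithBot ℕ) := Polynomial.degree_le_natDegree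
      _ ≤ (d : WithBot ℕ) := by exact_mod_cast hP
      _ < ((d+1 : ℕ) : WithBot ℕ) := by exact_mod_cast Nat.lt_succ_self d
  have h := Lagrange.eq_interpolate (v := v) (s := Finset.univ) hv.injOn hdeg
  conv_lhs => rw [h]
  rw [Lagrange.interpolate_apply, Polynomial.eval_finset_sum]
  refine Finset.sum_congr rfl fun i _ => ?_
  rw [Polynomial.eval_mul, Polynomial.eval_C, Lagrange.basis, Polynomial.eval_prod]
  refine congrArg _ (Finset.prod_congr rfl fun j _ => ?_)
  simp [Lagrange.basisDivisor]

set_option maxHeartbeats 2000000 in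
/-- Polynomials are large on a definite interval near a uniformly perfect set: for every
`d ≥ 1` and `κ ∈ (0,1)` there exists `κ̃ ∈ (0,1)` such that for every `ρ ∈ (0,1]` with
`κ < ρ/100` and every `κ`-uniformly perfect set `K ⊆ (-ρ,ρ)` containing `0`, every real
polynomial `P` of degree at most `d` is bounded below by `κ̃ ‖P‖_{∞,[-1,1]}` on a whole
interval `[z₀ - κ̃, z₀ + κ̃]` with `z₀ ∈ K ∩ (-ρ/2, ρ/2)`. -/
theorem stmt_7 (d : ℕ) (hd : 1 ≤ d) (κ : ℝ) (hκ : κ ∈ Set.Ioo (0 : ℝ) 1) :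
    ∃ κ' ∈ Set.Ioo (0 : ℝ) 1,
      ∀ ρ : ℝ, ρ ∈ Set.Ioc (0 : ℝ) 1 → κ < ρ / 100 →
        ∀ K : Set ℝ, K ⊆ Set.Ioo (-ρ) ρ → (0 : ℝ) ∈ K →
          (∀ σ ∈ Set.Ioo (0 : ℝ) 1, ∀ x ∈ K, ∃ y ∈ K, κ * σ ≤ |x - y| ∧ |x - y| ≤ σ) →
          ∀ P : Polynomial ℝ, P.natDegree ≤ d →
            ∃ z₀ ∈ K ∩ Set.Ioo (-(ρ / 2)) (ρ / 2),
              ∀ z ∈ Set.Icc (z₀ - κ') (z₀ + κ'),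
                κ' * (⨆ t : Set.Icc (-1 : ℝ) 1, |P.eval (t : ℝ)|) ≤ |P.eval z| := by
  obtain ⟨hκ0, hκ1⟩ := hκ
  by_cases hsmall : κ < 1/100
  case neg =>
    refine ⟨1/2, by norm_num, ?_⟩
    intro ρ hρ hκρ
    exact absurd (by linarith [hρ.2] : κ < 1/100) hsmall
  -- Main case
  set σ : ℕ → ℝ := fun k => 10*κ*(κ/4)^k with hσdef
  have hq0 : (0:ℝ) < κ/4 := by linarith
  have hq1 : κ/4 < 1 := by linarith
  have hσpos : ∀ k, 0 < σ k := fun k => by positivity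
  have hσlt : ∀ k, σ k < 1 := by
    intro k
    have h1 : (κ/4)^k ≤ 1 := pow_le_one₀ hq0.le hq1.le
    have : σ k ≤ 10*κ := by
      rw [hσdef]
      nlinarith
    linarith
  have hσsucc : ∀ k, σ (k+1) = (κ/4) * σ k := by
    intro k; rw [hσdef]; simp only; rw [pow_succ]; ring
  have hσanti : ∀ i j : ℕ, i ≤ j → σ j ≤ σ i := by
    intro i j hij
    have := pow_le_pow_of_le_one hq0.le hq1.le hij
    rw [hσdef]; simp only; nlinarith
  set s : ℝ := (κ/2) * σ d with hsdef
  have hs0 : 0 < s := by positivity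
  have hs1 : s < 1 := by
    have := hσlt d
    have := hσpos d
    nlinarith
  set κ' : ℝ := s^(d+1) / (2*((d:ℝ)+1)^2*3^d) with hκ'def
  have hd1 : (1:ℝ) ≤ (d:ℝ) := by exact_mod_cast hd
  have hκ'0 : 0 < κ' := by positivity
  have hκ'1 : κ' < 1 := by
    have hnum : s^(d+1) < 1 := pow_lt_one₀ hs0.le hs1 (Nat.succ_ne_zero d)
    have hden : (2:ℝ) ≤ 2*((d:ℝ)+1)^2*3^d := by
      have h3 : (1:ℝ) ≤ 3^d := one_le_pow₀ (by norm_num)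
      nlinarith
    rw [hκ'def, div_lt_one (by positivity)]
    linarith
  refine ⟨κ', ⟨hκ'0, hκ'1⟩, ?_⟩
  intro ρ hρ hκρ K hKsub h0K hUP P hPdeg
  obtain ⟨hρ0, hρ1⟩ := hρ
  -- construct the sequence of points
  have hσmem : ∀ k, σ k ∈ Set.Ioo (0:ℝ) 1 := fun k => ⟨hσpos k, hσlt k⟩
  have hnext : ∀ (k : ℕ) (x : K), ∃ y : K, κ * σ k ≤ |(x:ℝ) - y| ∧ |(x:ℝ) - y| ≤ σ k := by
    rintro k ⟨x, hx⟩
    obtain ⟨y, hy, h1, h2⟩ := hUP (σ k) (hσmem k) x hx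
    exact ⟨⟨y, hy⟩, h1, h2⟩
  choose f hf1 hf2 using hnext
  set x : ℕ → K := fun k => Nat.rec ⟨0, h0K⟩ (fun k xk => f k xk) k with hxdef
  have hx0 : (x 0 : ℝ) = 0 := rfl
  have step1 : ∀ k, κ * σ k ≤ |(x k : ℝ) - x (k+1)| := fun k => hf1 k (x k)
  have step2 : ∀ k, |(x k : ℝ) - x (k+1)| ≤ σ k := fun k => hf2 k (x k)
  have drift : ∀ m i, |(x i : ℝ) - x (i+m)| ≤ 2 * σ i := by
    intro m
    induction m with
    | zero =>
      intro i
      simp only [Nat.add_zero, sub_self, abs_zero]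
      positivity
    | succ m ih =>
      intro i
      have e : i + (m+1) = (i+1) + m := by omega
      rw [e]
      have h1 := step2 i
      have h2 := ih (i+1)
      have h3 : |(x i : ℝ) - x ((i+1)+m)| ≤ |(x i : ℝ) - x (i+1)| + |(x (i+1) : ℝ) - x ((i+1)+m)| :=
        abs_sub_le _ _ _
      have h4 := hσsucc i
      have h5 := hσpos i
      nlinarith
  have sep : ∀ i j : ℕ, i < j → (κ/2) * σ i ≤ |(x i:ℝ) - x j| := by
    intro i j hij
    obtain ⟨m, rfl⟩ : ∃ m, j = (i+1)+m := ⟨j - (i+1), by omega⟩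
    have h1 := step1 i
    have h2 := drift m (i+1)
    have h3 : |(x i : ℝ) - x (i+1)| ≤ |(x i : ℝ) - x ((i+1)+m)| + |(x ((i+1)+m) : ℝ) - x (i+1)| :=
      abs_sub_le _ _ _
    rw [abs_sub_comm ((x ((i+1)+m) : ℝ)) _] at h3
    have h4 := hσsucc i
    have h5 := hσpos i
    nlinarith
  set v : Fin (d+1) → ℝ := fun i => (x i : ℝ) with hvdef
  have hsep' : ∀ i j : Fin (d+1), i ≠ j → s ≤ |v i - v j| := by
    intro i j hij
    rcases lt_or_gt_of_ne (fun h : (i:ℕ) = (j:ℕ) => hij (Fin.ext h)) with h | h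
    · calc s ≤ (κ/2) * σ i := by
            have := hσanti i d (by omega)
            nlinarith
        _ ≤ |v i - v j| := sep i j h
    · calc s ≤ (κ/2) * σ j := by
            have := hσanti j d (by omega)
            nlinarith
        _ ≤ |v j - v i| := sep j i h
        _ = |v i - v j| := abs_sub_comm _ _
  have hvinj : Function.Injective v := by
    intro i j h
    by_contra hne
    have := hsep' i j hne
    rw [h, sub_self, abs_zero] at this
    linarith
  have hvbound : ∀ i : Fin (d+1), |v i| ≤ 20*κ := by
    intro i
    have := drift i 0
    rw [hx0] at this
    simp only [zero_add, zero_sub, abs_neg] at this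
    calc |v i| = |(x (i:ℕ) : ℝ)| := rfl
      _ ≤ 2 * σ 0 := this
      _ = 20*κ := by rw [hσdef]; simp; ring
  have hvb1 : ∀ i : Fin (d+1), |v i| ≤ 1/5 := fun i => (hvbound i).trans (by linarith)
  obtain ⟨I, hI⟩ := Finite.exists_max (fun i : Fin (d+1) => |P.eval (v i)|)
  set B := |P.eval (v I)| with hBdef
  have hB0 : 0 ≤ B := abs_nonneg _
  have hcard : ∀ i : Fin (d+1), (Finset.univ.erase i).card = d := by
    intro i
    rw [Finset.card_erase_of_mem (Finset.mem_univ i), Finset.card_univ, Fintype.card_fin]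
    omega
  -- claim A : sup bound
  have hA : ∀ t : ℝ, |t| ≤ 1 → |P.eval t| ≤ ((d:ℝ)+1) * (B * (2/s)^d) := by
    intro t ht
    obtain ⟨ht1, ht2⟩ := abs_le.mp ht
    rw [lagrange_eval_eq' v hvinj P hPdeg t]
    calc |∑ i : Fin (d+1), P.eval (v i) * ∏ j ∈ Finset.univ.erase i, ((v i - v j)⁻¹ * (t - v j))|
        ≤ ∑ i : Fin (d+1), |P.eval (v i) * ∏ j ∈ Finset.univ.erase i, ((v i - v j)⁻¹ * (t - v j))| :=
          Finset.abs_sum_le_sum_abs _ _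
      _ ≤ ∑ _i : Fin (d+1), B * (2/s)^d := by
          refine Finset.sum_le_sum fun i _ => ?_
          rw [abs_mul]
          refine mul_le_mul (hI i) ?_ (abs_nonneg _) hB0
          have hfac : ∀ j ∈ Finset.univ.erase i, |(v i - v j)⁻¹ * (t - v j)| ≤ 2/s := by
            intro j hj
            have hji : j ≠ i := (Finset.mem_erase.mp hj).1
            have hsij := hsep' i j (Ne.symm hji)
            obtain ⟨hb1, hb2⟩ := abs_le.mp (hvb1 j)
            rw [abs_mul, abs_inv]
            have hinv : |v i - v j|⁻¹ ≤ s⁻¹ := by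
              apply inv_anti₀ hs0 hsij
            have htv : |t - v j| ≤ 2 := abs_le.mpr ⟨by linarith, by linarith⟩
            calc |v i - v j|⁻¹ * |t - v j| ≤ s⁻¹ * 2 :=
                  mul_le_mul hinv htv (abs_nonneg _) (by positivity)
              _ = 2/s := by ring
          have := abs_prod_le' (Finset.univ.erase i) _ (by positivity : (0:ℝ) ≤ 2/s) hfac
          rwa [hcard i] at this
      _ = ((d:ℝ)+1) * (B * (2/s)^d) := by
          rw [Finset.sum_const, Finset.card_univ, Fintype.card_fin, nsmul_eq_mul]
          push_cast; ring
  -- claim Lip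
  have hLip : ∀ z : ℝ, |z - v I| ≤ κ' →
      |P.eval z - P.eval (v I)| ≤ ((d:ℝ)+1) * (B * ((d:ℝ) * (κ'/s) * (3/s)^d)) := by
    intro z hz
    obtain ⟨hz1, hz2⟩ := abs_le.mp hz
    obtain ⟨hI1, hI2⟩ := abs_le.mp (hvb1 I)
    rw [lagrange_eval_eq' v hvinj P hPdeg z, lagrange_eval_eq' v hvinj P hPdeg (v I),
      ← Finset.sum_sub_distrib]
    have hterm : ∀ i : Fin (d+1),
        P.eval (v i) * ∏ j ∈ Finset.univ.erase i, ((v i - v j)⁻¹ * (z - v j))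
        - P.eval (v i) * ∏ j ∈ Finset.univ.erase i, ((v i - v j)⁻¹ * (v I - v j))
        = P.eval (v i) * (∏ j ∈ Finset.univ.erase i, ((v i - v j)⁻¹ * (z - v j))
          - ∏ j ∈ Finset.univ.erase i, ((v i - v j)⁻¹ * (v I - v j))) := fun i => by ring
    calc |∑ i : Fin (d+1), (P.eval (v i) * ∏ j ∈ Finset.univ.erase i, ((v i - v j)⁻¹ * (z - v j))
          - P.eval (v i) * ∏ j ∈ Finset.univ.erase i, ((v i - v j)⁻¹ * (v I - v j)))|
        ≤ ∑ i : Fin (d+1), |P.eval (v i) * ∏ j ∈ Finset.univ.erase i, ((v i - v j)⁻¹ * (z - v j))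
          - P.eval (v i) * ∏ j ∈ Finset.univ.erase i, ((v i - v j)⁻¹ * (v I - v j))| :=
          Finset.abs_sum_le_sum_abs _ _
      _ ≤ ∑ _i : Fin (d+1), B * ((d:ℝ) * (κ'/s) * (3/s)^d) := by
          refine Finset.sum_le_sum fun i _ => ?_
          rw [hterm i, abs_mul]
          refine mul_le_mul (hI i) ?_ (abs_nonneg _) hB0
          have hbnd := abs_prod_sub_prod_le' (Finset.univ.erase i)
            (fun j => (v i - v j)⁻¹ * (z - v j)) (fun j => (v i - v j)⁻¹ * (v I - v j))
            (R := 3/s) (ε := κ'/s)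
            (by rw [le_div_iff₀ hs0]; linarith)
            (by positivity)
            ?_ ?_ ?_
          · rw [hcard i] at hbnd
            exact hbnd
          · intro j hj
            have hji : j ≠ i := (Finset.mem_erase.mp hj).1
            have hsij := hsep' i j (Ne.symm hji)
            obtain ⟨hb1, hb2⟩ := abs_le.mp (hvb1 j)
            rw [abs_mul, abs_inv]
            have hinv : |v i - v j|⁻¹ ≤ s⁻¹ := inv_anti₀ hs0 hsij
            have htv : |z - v j| ≤ 3 := abs_le.mpr ⟨by linarith, by linarith⟩
            calc |v i - v j|⁻¹ * |z - v j| ≤ s⁻¹ * 3 :=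
                  mul_le_mul hinv htv (abs_nonneg _) (by positivity)
              _ = 3/s := by ring
          · intro j hj
            have hji : j ≠ i := (Finset.mem_erase.mp hj).1
            have hsij := hsep' i j (Ne.symm hji)
            obtain ⟨hb1, hb2⟩ := abs_le.mp (hvb1 j)
            rw [abs_mul, abs_inv]
            have hinv : |v i - v j|⁻¹ ≤ s⁻¹ := inv_anti₀ hs0 hsij
            have htv : |v I - v j| ≤ 3 := abs_le.mpr ⟨by linarith, by linarith⟩
            calc |v i - v j|⁻¹ * |v I - v j| ≤ s⁻¹ * 3 :=
                  mul_le_mul hinv htv (abs_nonneg _) (by positivity)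
              _ = 3/s := by ring
          · intro j hj
            have hji : j ≠ i := (Finset.mem_erase.mp hj).1
            have hsij := hsep' i j (Ne.symm hji)
            have heq : (v i - v j)⁻¹ * (z - v j) - (v i - v j)⁻¹ * (v I - v j)
                = (v i - v j)⁻¹ * (z - v I) := by ring
            rw [heq, abs_mul, abs_inv]
            have hinv : |v i - v j|⁻¹ ≤ s⁻¹ := inv_anti₀ hs0 hsij
            calc |v i - v j|⁻¹ * |z - v I| ≤ s⁻¹ * κ' :=
                  mul_le_mul hinv hz (abs_nonneg _) (by positivity)
              _ = κ'/s := by ring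
      _ = ((d:ℝ)+1) * (B * ((d:ℝ) * (κ'/s) * (3/s)^d)) := by
          rw [Finset.sum_const, Finset.card_univ, Fintype.card_fin, nsmul_eq_mul]
          push_cast; ring
  -- numeric keys
  have h3d : (0:ℝ) < 3^d := by positivity
  have key1 : ((d:ℝ)+1) * ((d:ℝ) * (κ'/s) * (3/s)^d) ≤ 1/2 := by
    have e1 : ((d:ℝ)+1) * ((d:ℝ) * (κ'/s) * (3/s)^d) = (d:ℝ)/(2*((d:ℝ)+1)) := by
      rw [hκ'def, div_pow, pow_succ]
      field_simp
    rw [e1, div_le_iff₀ (by linarith)]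
    linarith
  have key2 : κ' * (((d:ℝ)+1) * (2/s)^d) ≤ 1/2 := by
    have e2 : κ' * (((d:ℝ)+1) * (2/s)^d) = 2^d * s / (2*((d:ℝ)+1)*3^d) := by
      rw [hκ'def, div_pow, pow_succ]
      field_simp
    rw [e2, div_le_iff₀ (by positivity)]
    have h23 : (2:ℝ)^d ≤ 3^d := pow_le_pow_left₀ (by norm_num) (by norm_num) d
    nlinarith [pow_pos (show (0:ℝ) < 2 by norm_num) d]
  -- conclusion
  refine ⟨v I, ⟨(x (I:ℕ)).2, ?_⟩, ?_⟩
  · obtain ⟨hb1, hb2⟩ := abs_le.mp (hvbound I)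
    rw [Set.mem_Ioo]
    constructor <;> nlinarith
  · intro z hz
    obtain ⟨hz1, hz2⟩ := hz
    have hzI : |z - v I| ≤ κ' := abs_le.mpr ⟨by linarith, by linarith⟩
    have hM : (⨆ t : Set.Icc (-1 : ℝ) 1, |P.eval (t : ℝ)|) ≤ ((d:ℝ)+1) * (B * (2/s)^d) := by
      refine Real.iSup_le (fun t => hA t (abs_le.mpr ⟨t.2.1, t.2.2⟩)) (by positivity)
    have hLz := hLip z hzI
    have hPz : B - ((d:ℝ)+1) * (B * ((d:ℝ) * (κ'/s) * (3/s)^d)) ≤ |P.eval z| := by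
      have htri : B ≤ |P.eval z| + |P.eval z - P.eval (v I)| := by
        have := abs_sub_le (P.eval (v I)) (P.eval z) 0
        simp only [sub_zero] at this
        calc B = |P.eval (v I)| := rfl
          _ ≤ |P.eval (v I) - P.eval z| + |P.eval z| := this
          _ = |P.eval z - P.eval (v I)| + |P.eval z| := by rw [abs_sub_comm]
          _ = |P.eval z| + |P.eval z - P.eval (v I)| := by ring
      linarith
    have hchain1 : κ' * (⨆ t : Set.Icc (-1 : ℝ) 1, |P.eval (t : ℝ)|)
        ≤ κ' * (((d:ℝ)+1) * (B * (2/s)^d)) := by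
      exact mul_le_mul_of_nonneg_left hM hκ'0.le
    have hchain2 : κ' * (((d:ℝ)+1) * (B * (2/s)^d)) ≤ (1/2) * B := by
      have : κ' * (((d:ℝ)+1) * (B * (2/s)^d)) = (κ' * (((d:ℝ)+1) * (2/s)^d)) * B := by ring
      rw [this]
      exact mul_le_mul_of_nonneg_right key2 hB0
    have hchain3 : ((d:ℝ)+1) * (B * ((d:ℝ) * (κ'/s) * (3/s)^d)) ≤ (1/2) * B := by
      have : ((d:ℝ)+1) * (B * ((d:ℝ) * (κ'/s) * (3/s)^d))
          = (((d:ℝ)+1) * ((d:ℝ) * (κ'/s) * (3/s)^d)) * B := by ring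
      rw [this]
      exact mul_le_mul_of_nonneg_right key1 hB0
    linarith
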